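/- arXiv:1205.5085 — 2 statements merged into one kernel-verified Lean document; each statement's English description precedes it below -/
import Mathlib

section
/- Fix k > 0 and let f, g ∈ V₃. Then lim_{x→1⁻} (1-x²)f''(x)ḡ'(x) = 0 and lim_{x→-1⁺} (1-x²)f''(x)ḡ'(x) = 0. -/
open MeasureTheory Set Filter Topology

/-- Membership in the third left-definite space
`V₃ = {f : (-1,1) → ℂ | f, f', f'' ∈ AC_loc(-1,1); (1-x²)f''' ∈ L²(-1,1),
(1-x²)^{1/2}f'' ∈ L²(-1,1), f' ∈ L²(-1,1), (1-x²)^{-1/2}f ∈ L²(-1,1)}`,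
encoded via the derivative functions `f', f'', f'''`. -/
def InV3 (f f' f'' f''' : ℝ → ℂ) : Prop :=
  (∀ x ∈ Ioo (-1 : ℝ) 1, ∀ y ∈ Ioo (-1 : ℝ) 1, IntervalIntegrable f' volume x y) ∧
  (∀ x ∈ Ioo (-1 : ℝ) 1, ∀ y ∈ Ioo (-1 : ℝ) 1, IntervalIntegrable f'' volume x y) ∧
  (∀ x ∈ Ioo (-1 : ℝ) 1, ∀ y ∈ Ioo (-1 : ℝ) 1, IntervalIntegrable f''' volume x y) ∧
  (∀ x ∈ Ioo (-1 : ℝ) 1, ∀ y ∈ Ioo (-1 : ℝ) 1, f y - f x = ∫ t in x..y, f' t) ∧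
  (∀ x ∈ Ioo (-1 : ℝ) 1, ∀ y ∈ Ioo (-1 : ℝ) 1, f' y - f' x = ∫ t in x..y, f'' t) ∧
  (∀ x ∈ Ioo (-1 : ℝ) 1, ∀ y ∈ Ioo (-1 : ℝ) 1, f'' y - f'' x = ∫ t in x..y, f''' t) ∧
  IntegrableOn (fun x => (1 - x ^ 2) ^ 2 * ‖f''' x‖ ^ 2) (Ioo (-1 : ℝ) 1) ∧
  IntegrableOn (fun x => (1 - x ^ 2) * ‖f'' x‖ ^ 2) (Ioo (-1 : ℝ) 1) ∧
  IntegrableOn (fun x => ‖f' x‖ ^ 2) (Ioo (-1 : ℝ) 1) ∧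
  IntegrableOn (fun x => ‖f x‖ ^ 2 * (1 - x ^ 2)⁻¹) (Ioo (-1 : ℝ) 1)

open scoped Interval

lemma ibp {u v u' v' : ℝ → ℂ} {a b : ℝ} (hab : a ≤ b)
    (hu' : IntervalIntegrable u' volume a b) (hv' : IntervalIntegrable v' volume a b)
    (hu : ∀ t ∈ Icc a b, u t - u a = ∫ s in a..t, u' s)
    (hv : ∀ t ∈ Icc a b, v t - v a = ∫ s in a..t, v' s) :
    u b * v b - u a * v a = ∫ t in a..b, (u' t * v t + u t * v' t) := by
  set μ : Measure ℝ := volume.restrict (Ioc a b) with hμdef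
  have hu'I : Integrable u' μ := (intervalIntegrable_iff_integrableOn_Ioc_of_le hab).1 hu'
  have hv'I : Integrable v' μ := (intervalIntegrable_iff_integrableOn_Ioc_of_le hab).1 hv'
  have hS : MeasurableSet {p : ℝ × ℝ | p.1 < p.2} :=
    measurableSet_lt measurable_fst measurable_snd
  have hS' : MeasurableSet {p : ℝ × ℝ | p.2 < p.1} :=
    measurableSet_lt measurable_snd measurable_fst
  have hSΦ : Integrable ({p : ℝ × ℝ | p.1 < p.2}.indicator fun p => u' p.1 * v' p.2) (μ.prod μ) :=
    (hu'I.mul_prod hv'I).indicator hS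
  have hS'Ψ : Integrable ({p : ℝ × ℝ | p.2 < p.1}.indicator fun p => v' p.1 * u' p.2) (μ.prod μ) :=
    (hv'I.mul_prod hu'I).indicator hS'
  have hu'int : ∫ t, u' t ∂μ = u b - u a := by
    rw [hμdef, ← intervalIntegral.integral_of_le hab, ← hu b ⟨hab, le_refl b⟩]
  have hv'int : ∫ t, v' t ∂μ = v b - v a := by
    rw [hμdef, ← intervalIntegral.integral_of_le hab, ← hv b ⟨hab, le_refl b⟩]
  -- pointwise identities
  have key1 : ∀ t ∈ Ioc a b, u' t * v t =
      u' t * v b - ∫ s, ({p : ℝ × ℝ | p.1 < p.2}.indicator fun p => u' p.1 * v' p.2) (t, s) ∂μ := by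
    intro t ht
    have h1 : (fun s => ({p : ℝ × ℝ | p.1 < p.2}.indicator fun p => u' p.1 * v' p.2) (t, s))
        = fun s => u' t * (Ioi t).indicator v' s := by
      funext s
      by_cases h : t < s
      · simp [Set.indicator_of_mem, h, Set.mem_setOf_eq, Set.mem_Ioi]
      · simp [Set.indicator_of_notMem, h, Set.mem_setOf_eq, Set.mem_Ioi]
    rw [h1, integral_const_mul]
    have h2 : ∫ s, (Ioi t).indicator v' s ∂μ = v b - v t := by
      rw [hμdef, integral_indicator measurableSet_Ioi, Measure.restrict_restrict measurableSet_Ioi]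
      have hint : Ioi t ∩ Ioc a b = Ioc t b := by
        ext s; simp only [mem_inter_iff, mem_Ioi, mem_Ioc]
        constructor
        · rintro ⟨h1', h2', h3'⟩; exact ⟨h1', h3'⟩
        · rintro ⟨h1', h2'⟩; exact ⟨h1', ht.1.trans h1', h2'⟩
      rw [hint, ← intervalIntegral.integral_of_le ht.2]
      have e1 := hv b ⟨hab, le_refl b⟩
      have e2 := hv t ⟨ht.1.le, ht.2⟩
      have e3 : (∫ s in a..b, v' s) - ∫ s in a..t, v' s = ∫ s in t..b, v' s :=
        intervalIntegral.integral_interval_sub_left hv'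
          (hv'.mono_set (by rw [uIcc_of_le hab, uIcc_of_le ht.1.le]
                            exact Icc_subset_Icc_right ht.2))
      linear_combination e2 - e1 - e3
    rw [h2]; ring
  have key2 : ∀ t ∈ Ioc a b, u t * v' t =
      u a * v' t + ∫ s, ({p : ℝ × ℝ | p.2 < p.1}.indicator fun p => v' p.1 * u' p.2) (t, s) ∂μ := by
    intro t ht
    have h1 : (fun s => ({p : ℝ × ℝ | p.2 < p.1}.indicator fun p => v' p.1 * u' p.2) (t, s))
        = fun s => v' t * (Iio t).indicator u' s := by
      funext s
      by_cases h : s < t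
      · simp [Set.indicator_of_mem, h, Set.mem_setOf_eq, Set.mem_Iio]
      · simp [Set.indicator_of_notMem, h, Set.mem_setOf_eq, Set.mem_Iio]
    rw [h1, integral_const_mul]
    have h2 : ∫ s, (Iio t).indicator u' s ∂μ = u t - u a := by
      rw [hμdef, integral_indicator measurableSet_Iio, Measure.restrict_restrict measurableSet_Iio]
      have hint : Iio t ∩ Ioc a b = Ioo a t := by
        ext s; simp only [mem_inter_iff, mem_Iio, mem_Ioc, mem_Ioo]
        constructor
        · rintro ⟨h1', h2', h3'⟩; exact ⟨h2', h1'⟩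
        · rintro ⟨h1', h2'⟩; exact ⟨h2', h1', (h2'.le.trans ht.2)⟩
      rw [hint, ← integral_Ioc_eq_integral_Ioo, ← intervalIntegral.integral_of_le ht.1.le]
      exact (hu t ⟨ht.1.le, ht.2⟩).symm
    rw [h2]; ring
  -- integrability of the two products
  have intA : Integrable (fun t => u' t * v t) μ := by
    refine Integrable.congr ((hu'I.mul_const (v b)).sub hSΦ.integral_prod_left) ?_
    refine Filter.eventually_of_mem (self_mem_ae_restrict measurableSet_Ioc) fun t ht => ?_
    exact (key1 t ht).symm
  have intB : Integrable (fun t => u t * v' t) μ := by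
    refine Integrable.congr ((hv'I.const_mul (u a)).add hS'Ψ.integral_prod_left) ?_
    refine Filter.eventually_of_mem (self_mem_ae_restrict measurableSet_Ioc) fun t ht => ?_
    exact (key2 t ht).symm
  have hA : ∫ t, u' t * v t ∂μ = (u b - u a) * v b
      - ∫ p, ({p : ℝ × ℝ | p.1 < p.2}.indicator fun p => u' p.1 * v' p.2) p ∂(μ.prod μ) := by
    have : ∫ t, u' t * v t ∂μ
        = ∫ t, (u' t * v b - ∫ s, ({p : ℝ × ℝ | p.1 < p.2}.indicator fun p => u' p.1 * v' p.2) (t, s) ∂μ) ∂μ := by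
      refine integral_congr_ae ?_
      exact Filter.eventually_of_mem (self_mem_ae_restrict measurableSet_Ioc) fun t ht => key1 t ht
    rw [this, integral_sub (hu'I.mul_const (v b)) hSΦ.integral_prod_left,
      integral_mul_const, hu'int, integral_prod _ hSΦ]
  have hB : ∫ t, u t * v' t ∂μ = u a * (v b - v a)
      + ∫ p, ({p : ℝ × ℝ | p.2 < p.1}.indicator fun p => v' p.1 * u' p.2) p ∂(μ.prod μ) := by
    have : ∫ t, u t * v' t ∂μ
        = ∫ t, (u a * v' t + ∫ s, ({p : ℝ × ℝ | p.2 < p.1}.indicator fun p => v' p.1 * u' p.2) (t, s) ∂μ) ∂μ := by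
      refine integral_congr_ae ?_
      exact Filter.eventually_of_mem (self_mem_ae_restrict measurableSet_Ioc) fun t ht => key2 t ht
    rw [this, integral_add (hv'I.const_mul (u a)) hS'Ψ.integral_prod_left,
      integral_const_mul, hv'int, integral_prod _ hS'Ψ]
  have hDE : ∫ p, ({p : ℝ × ℝ | p.2 < p.1}.indicator fun p => v' p.1 * u' p.2) p ∂(μ.prod μ)
      = ∫ p, ({p : ℝ × ℝ | p.1 < p.2}.indicator fun p => u' p.1 * v' p.2) p ∂(μ.prod μ) := by
    have hsw := integral_prod_swap (μ := μ) (ν := μ)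
      ({p : ℝ × ℝ | p.2 < p.1}.indicator fun p => v' p.1 * u' p.2)
    rw [← hsw]
    refine integral_congr_ae (Filter.Eventually.of_forall fun z => ?_)
    by_cases h : z.1 < z.2
    · simp only [Prod.swap, Set.indicator_of_mem, Set.mem_setOf_eq, h, mul_comm]
    · simp only [Prod.swap, Set.indicator_of_notMem, Set.mem_setOf_eq, h, not_false_iff]
  rw [intervalIntegral.integral_of_le hab, ← hμdef, integral_add intA intB, hA, hB, hDE]
  ring

lemma contOn {u u' : ℝ → ℂ}
    (hI : ∀ x ∈ Ioo (-1:ℝ) 1, ∀ y ∈ Ioo (-1:ℝ) 1, IntervalIntegrable u' volume x y)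
    (hrep : ∀ x ∈ Ioo (-1:ℝ) 1, ∀ y ∈ Ioo (-1:ℝ) 1, u y - u x = ∫ t in x..y, u' t) :
    ContinuousOn u (Ioo (-1:ℝ) 1) := by
  intro x hx
  set p : ℝ := (x + -1)/2 with hp
  set q : ℝ := (x + 1)/2 with hq
  have hpq : p < x ∧ x < q ∧ -1 < p ∧ q < 1 := by
    constructor; · rw [hp]; linarith [hx.1]
    constructor; · rw [hq]; linarith [hx.2]
    constructor; · rw [hp]; linarith [hx.1]
    · rw [hq]; linarith [hx.2]
  have hpmem : p ∈ Ioo (-1:ℝ) 1 := ⟨hpq.2.2.1, by linarith [hpq.1, hx.2]⟩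
  have hqmem : q ∈ Ioo (-1:ℝ) 1 := ⟨by linarith [hpq.2.1, hx.1], hpq.2.2.2⟩
  have hsub : Icc p q ⊆ Ioo (-1:ℝ) 1 := fun t ht => ⟨lt_of_lt_of_le hpq.2.2.1 ht.1,
    lt_of_le_of_lt ht.2 hpq.2.2.2⟩
  have hple : p ≤ q := by linarith [hpq.1, hpq.2.1]
  have hcont : ContinuousOn (fun t => u p + ∫ s in p..t, u' s) (Icc p q) := by
    have := intervalIntegral.continuousOn_primitive_interval'
      (hI p hpmem q hqmem) (left_mem_uIcc (a := p) (b := q))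
    rw [uIcc_of_le hple] at this
    exact continuousOn_const.add this
  have : ContinuousOn u (Icc p q) := by
    refine ContinuousOn.congr hcont fun t ht => ?_
    have := hrep p hpmem t (hsub ht)
    linear_combination this
  exact (this.continuousAt (Icc_mem_nhds hpq.1 hpq.2.1)).continuousWithinAt

lemma myIntegrableOn {E : Type*} [NormedAddCommGroup E] {f : ℝ → E} {c d I : ℝ} (hcd : c < d)
    (hfi : ∀ y ∈ Ioo c d, IntegrableOn f (Ioc c y) volume)
    (hI : ∀ y ∈ Ioo c d, (∫ x in Ioc c y, ‖f x‖) ≤ I) :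
    IntegrableOn f (Ioo c d) volume := by
  set y : ℕ → ℝ := fun n => d - (d - c)/(n + 2) with hy
  have hymem : ∀ n, y n ∈ Ioo c d := by
    intro n
    have h2 : (0:ℝ) < (n:ℝ) + 2 := by positivity
    have hlt : (d - c)/((n:ℝ) + 2) < d - c :=
      div_lt_self (by linarith) (by norm_num [Nat.cast_nonneg]; linarith [Nat.cast_nonneg (α := ℝ) n])
    have hpos : 0 < (d - c)/((n:ℝ) + 2) := div_pos (by linarith) h2
    constructor
    · simp only [hy]; linarith
    · simp only [hy]; linarith
  have hytend : Tendsto y atTop (𝓝 d) := by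
    rw [hy]
    have : Tendsto (fun n : ℕ => (d - c)/((n:ℝ) + 2)) atTop (𝓝 0) := by
      apply Tendsto.div_atTop (tendsto_const_nhds)
      exact (tendsto_natCast_atTop_atTop (R := ℝ)).atTop_add tendsto_const_nhds
    simpa using tendsto_const_nhds.sub this
  have hcov : AECover (volume.restrict (Ioo c d)) atTop (fun n => Ioc c (y n)) := by
    constructor
    · refine Filter.eventually_of_mem (self_mem_ae_restrict measurableSet_Ioo) fun x hx => ?_
      filter_upwards [hytend.eventually (eventually_ge_nhds hx.2)] with n hn
      exact ⟨hx.1, hn⟩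
    · intro n; exact measurableSet_Ioc
  refine hcov.integrable_of_integral_norm_bounded I ?_ ?_
  · intro n
    rw [IntegrableOn, Measure.restrict_restrict measurableSet_Ioc,
      inter_eq_left.2 (Ioc_subset_Ioo_right (hymem n).2)]
    exact hfi (y n) (hymem n)
  · refine Filter.Eventually.of_forall fun n => ?_
    rw [Measure.restrict_restrict measurableSet_Ioc,
      inter_eq_left.2 (Ioc_subset_Ioo_right (hymem n).2)]
    exact hI (y n) (hymem n)

lemma intervalIntegrable_star {f : ℝ → ℂ} {a b : ℝ} (h : IntervalIntegrable f volume a b) :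
    IntervalIntegrable (fun x => star (f x)) volume a b := by
  constructor
  · exact Integrable.mono' h.1.norm
      (continuous_star.comp_aestronglyMeasurable h.1.aestronglyMeasurable)
      (Filter.Eventually.of_forall fun x => by simp)
  · exact Integrable.mono' h.2.norm
      (continuous_star.comp_aestronglyMeasurable h.2.aestronglyMeasurable)
      (Filter.Eventually.of_forall fun x => by simp)

lemma refl_integrableOn {W : ℝ → ℝ} (h : IntegrableOn W (Ioo (-1:ℝ) 1) volume) :
    IntegrableOn (fun x => W (-x)) (Ioo (-1:ℝ) 1) volume := by
  have hpre : (Neg.neg : ℝ → ℝ) ⁻¹' (Ioo (-1:ℝ) 1) = Ioo (-1:ℝ) 1 := by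
    ext x; simp only [mem_preimage, mem_Ioo]; constructor <;> (rintro ⟨h1, h2⟩; constructor <;> linarith)
  have := (MeasurePreserving.integrableOn_comp_preimage
    (Measure.measurePreserving_neg (volume : Measure ℝ))
    (Homeomorph.neg ℝ).measurableEmbedding (f := W) (s := Ioo (-1:ℝ) 1)).2 h
  rw [hpre] at this
  exact this


set_option maxHeartbeats 1000000 in
lemma key (u u' v v' : ℝ → ℂ)
    (hui : ∀ x ∈ Ioo (-1:ℝ) 1, ∀ y ∈ Ioo (-1:ℝ) 1, IntervalIntegrable u' volume x y)
    (hvi : ∀ x ∈ Ioo (-1:ℝ) 1, ∀ y ∈ Ioo (-1:ℝ) 1, IntervalIntegrable v' volume x y)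
    (hur : ∀ x ∈ Ioo (-1:ℝ) 1, ∀ y ∈ Ioo (-1:ℝ) 1, u y - u x = ∫ t in x..y, u' t)
    (hvr : ∀ x ∈ Ioo (-1:ℝ) 1, ∀ y ∈ Ioo (-1:ℝ) 1, v y - v x = ∫ t in x..y, v' t)
    (Hu' : IntegrableOn (fun x => (1 - x ^ 2) ^ 2 * ‖u' x‖ ^ 2) (Ioo (-1:ℝ) 1) volume)
    (Hu : IntegrableOn (fun x => (1 - x ^ 2) * ‖u x‖ ^ 2) (Ioo (-1:ℝ) 1) volume)
    (Hv' : IntegrableOn (fun x => (1 - x ^ 2) * ‖v' x‖ ^ 2) (Ioo (-1:ℝ) 1) volume)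
    (Hv : IntegrableOn (fun x => ‖v x‖ ^ 2) (Ioo (-1:ℝ) 1) volume) :
    Tendsto (fun x => ((1 - x ^ 2 : ℝ) : ℂ) * u x * star (v x)) (𝓝[<] (1:ℝ)) (𝓝 0) := by
  have hcmem : (1/2 : ℝ) ∈ Ioo (-1:ℝ) 1 := by norm_num
  have hIccsub : ∀ {y : ℝ}, y < 1 → Icc (1/2 : ℝ) y ⊆ Ioo (-1:ℝ) 1 := fun {y} hy t ht =>
    ⟨by linarith [ht.1], lt_of_le_of_lt ht.2 hy⟩
  have hmemIoo : ∀ {y : ℝ}, y ∈ Ioo (1/2:ℝ) 1 → y ∈ Ioo (-1:ℝ) 1 := fun {y} hy =>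
    ⟨by linarith [hy.1], hy.2⟩
  have hcu : ContinuousOn u (Ioo (-1:ℝ) 1) := contOn hui hur
  have hcv : ContinuousOn v (Ioo (-1:ℝ) 1) := contOn hvi hvr
  -- star representations
  have star_rep : ∀ (w w' : ℝ → ℂ),
      (∀ x ∈ Ioo (-1:ℝ) 1, ∀ y ∈ Ioo (-1:ℝ) 1, w y - w x = ∫ t in x..y, w' t) →
      ∀ x ∈ Ioo (-1:ℝ) 1, ∀ y ∈ Ioo (-1:ℝ) 1, x ≤ y →
      star (w y) - star (w x) = ∫ t in x..y, star (w' t) := by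
    intro w w' hr x hx y hy hxy
    rw [intervalIntegral.integral_of_le hxy]
    have h0 := hr x hx y hy
    rw [intervalIntegral.integral_of_le hxy] at h0
    rw [← star_sub, h0]
    simp only [← starRingEnd_apply]
    exact integral_conj.symm
  -- the pointwise product with star v and its "derivative"
  set m : ℝ → ℂ := fun s => u s * star (v s) with hm
  set m' : ℝ → ℂ := fun s => u' s * star (v s) + u s * star (v' s) with hm'
  set h : ℝ → ℂ := fun t => ((-2*t : ℝ) : ℂ) * m t + ((1 - t^2 : ℝ) : ℂ) * m' t with hh
  set P : ℝ → ℂ := fun x => ((1 - x ^ 2 : ℝ) : ℂ) * u x * star (v x) with hP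
  -- rep of m
  have hmrep : ∀ y ∈ Ioo (-1:ℝ) 1, (1/2:ℝ) ≤ y → ∀ t ∈ Icc (1/2:ℝ) y,
      m t - m (1/2) = ∫ s in (1/2 : ℝ)..t, m' s := by
    intro y hy hcy t ht
    have htm : t ∈ Ioo (-1:ℝ) 1 := ⟨by linarith [ht.1], lt_of_le_of_lt ht.2 hy.2⟩
    exact ibp ht.1 (hui _ hcmem t htm) (intervalIntegrable_star (hvi _ hcmem t htm))
      (fun s hs => hur _ hcmem s ⟨by linarith [hs.1], lt_of_le_of_lt hs.2 htm.2⟩)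
      (fun s hs => star_rep v v' hvr _ hcmem s ⟨by linarith [hs.1], lt_of_le_of_lt hs.2 htm.2⟩ hs.1)
  -- interval integrability of m'
  have hm'ii : ∀ y ∈ Ioo (-1:ℝ) 1, (1/2:ℝ) ≤ y → IntervalIntegrable m' volume (1/2) y := by
    intro y hy hcy
    have hsub : [[ (1/2:ℝ), y ]] ⊆ Ioo (-1:ℝ) 1 := by
      rw [uIcc_of_le hcy]; exact hIccsub hy.2
    refine IntervalIntegrable.add ?_ ?_
    · exact (hui _ hcmem y hy).mul_continuousOn ((hcv.mono hsub).star)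
    · exact (intervalIntegrable_star (hvi _ hcmem y hy)).continuousOn_mul (hcu.mono hsub)
  -- rep of P
  have hPrep : ∀ y ∈ Ioo (-1:ℝ) 1, (1/2:ℝ) ≤ y → P y - P (1/2) = ∫ t in (1/2:ℝ)..y, h t := by
    intro y hy hcy
    have hw : ∀ t ∈ Icc (1/2:ℝ) y, ((1 - t^2 : ℝ) : ℂ) - ((1 - (1/2:ℝ)^2 : ℝ) : ℂ)
        = ∫ s in (1/2:ℝ)..t, ((-2*s : ℝ) : ℂ) := by
      intro t ht
      rw [intervalIntegral.integral_ofReal]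
      have : (∫ s in (1/2:ℝ)..t, (-2*s)) = -2 * ((t^2 - (1/2:ℝ)^2)/2) := by
        rw [intervalIntegral.integral_const_mul, integral_id]
      rw [this]
      push_cast; ring
    have hwii : IntervalIntegrable (fun s : ℝ => ((-2*s : ℝ) : ℂ)) volume (1/2) y :=
      (Complex.continuous_ofReal.comp ((continuous_const.mul continuous_id))).intervalIntegrable _ _
    have := ibp (u := fun t => ((1 - t^2 : ℝ) : ℂ)) (v := m)
      (u' := fun s : ℝ => ((-2*s : ℝ) : ℂ)) (v' := m') hcy hwii (hm'ii y hy hcy)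
      hw (hmrep y hy hcy)
    simp only [hP, hh, hm, hm', mul_assoc]
    simp only [hm, hm'] at this
    exact this
  -- Hardy-type inequality: u is L^2 near 1
  have mul_star : ∀ z : ℂ, z * star z = ((‖z‖^2 : ℝ) : ℂ) := fun z => by
    rw [← starRingEnd_apply, RCLike.mul_conj]; norm_cast
  have hIooSub : Ioo (1/2:ℝ) 1 ⊆ Ioo (-1:ℝ) 1 := fun t ht => ⟨by linarith [ht.1], ht.2⟩
  have Ju : IntegrableOn (fun t => ‖u t‖^2) (Ioo (1/2:ℝ) 1) volume := by
    set C1 : ℝ := (1 - 1/2) * ‖u (1/2)‖^2 with hC1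
    set K : ℝ := ∫ t in Ioo (1/2:ℝ) 1, (1-t^2)^2 * ‖u' t‖^2 with hK
    have hfi : ∀ y ∈ Ioo (1/2:ℝ) 1, IntegrableOn (fun t => ‖u t‖^2) (Ioc (1/2:ℝ) y) volume := by
      intro y hy
      exact (((hcu.mono (hIccsub hy.2)).norm.pow 2).integrableOn_Icc).mono_set Ioc_subset_Icc_self
    have hbound : ∀ y ∈ Ioo (1/2:ℝ) 1, (∫ x in Ioc (1/2:ℝ) y, ‖(‖u x‖^2)‖) ≤ 2*C1 + 4*K := by
      intro y hy
      have hymem : y ∈ Ioo (-1:ℝ) 1 := hIooSub hy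
      have hcy : (1/2:ℝ) ≤ y := hy.1.le
      have hsubIcc2 : Icc (1/2:ℝ) y ⊆ Ioo (-1:ℝ) 1 := hIccsub hy.2
      have huIcc : ContinuousOn u (Icc (1/2:ℝ) y) := hcu.mono hsubIcc2
      set J : ℝ := ∫ t in (1/2:ℝ)..y, ‖u t‖^2 with hJ
      set nt : ℝ → ℂ := fun s => u' s * star (u s) + u s * star (u' s) with hnt
      set B : ℂ := ∫ t in (1/2:ℝ)..y, ((1 - t : ℝ) : ℂ) * nt t with hB
      have hntii : IntervalIntegrable nt volume (1/2) y := by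
        refine IntervalIntegrable.add ?_ ?_
        · exact (hui _ hcmem y hymem).mul_continuousOn
            (by rw [uIcc_of_le hcy]; exact huIcc.star)
        · exact (intervalIntegrable_star (hui _ hcmem y hymem)).continuousOn_mul
            (by rw [uIcc_of_le hcy]; exact huIcc)
      have hmtii : IntervalIntegrable (fun t => u t * star (u t)) volume (1/2) y := by
        apply ContinuousOn.intervalIntegrable
        rw [uIcc_of_le hcy]; exact huIcc.mul huIcc.star
      have hterm2 : IntervalIntegrable (fun t => ((1 - t : ℝ) : ℂ) * nt t) volume (1/2) y := by
        apply hntii.continuousOn_mul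
        exact Complex.continuous_ofReal.comp_continuousOn
          ((continuous_const.sub continuous_id).continuousOn)
      have hmtrep : ∀ t ∈ Icc (1/2:ℝ) y, u t * star (u t) - u (1/2) * star (u (1/2))
          = ∫ s in (1/2:ℝ)..t, nt s := by
        intro t ht
        have htm : t ∈ Ioo (-1:ℝ) 1 := hsubIcc2 ht
        exact ibp ht.1 (hui _ hcmem t htm) (intervalIntegrable_star (hui _ hcmem t htm))
          (fun s hs => hur _ hcmem s (hsubIcc2 ⟨hs.1, hs.2.trans ht.2⟩))
          (fun s hs => star_rep u u' hur _ hcmem s (hsubIcc2 ⟨hs.1, hs.2.trans ht.2⟩) hs.1)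
      have hw1 : ∀ t ∈ Icc (1/2:ℝ) y, ((1 - t : ℝ) : ℂ) - ((1 - (1/2:ℝ) : ℝ) : ℂ)
          = ∫ _ in (1/2:ℝ)..t, (-1 : ℂ) := by
        intro t ht
        rw [intervalIntegral.integral_const, Complex.real_smul]
        push_cast; ring
      have E1 := ibp (u := fun t : ℝ => ((1 - t : ℝ) : ℂ)) (v := fun t => u t * star (u t))
        (u' := fun _ : ℝ => (-1 : ℂ)) (v' := nt)
        hcy intervalIntegrable_const hntii hw1 hmtrep
      simp only [neg_one_mul] at E1
      have hsplit : (∫ t in (1/2:ℝ)..y, (-(u t * star (u t)) + ((1 - t:ℝ):ℂ) * nt t))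
          = -(∫ t in (1/2:ℝ)..y, (u t * star (u t))) + B := by
        have hnegii : IntervalIntegrable (fun t => -(u t * star (u t))) volume (1/2) y :=
          hmtii.neg
        rw [hB, intervalIntegral.integral_add hnegii hterm2, intervalIntegral.integral_neg]
      have hof : (∫ t in (1/2:ℝ)..y, (u t * star (u t))) = ((J : ℝ) : ℂ) := by
        rw [hJ, ← intervalIntegral.integral_ofReal]
        exact intervalIntegral.integral_congr fun t ht => mul_star (u t)
      rw [hsplit, hof, mul_star (u y), mul_star (u (1/2))] at E1
      have hBval : B = ((J - (1 - 1/2) * ‖u (1/2)‖^2 + (1 - y) * ‖u y‖^2 : ℝ) : ℂ) := by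
        push_cast at E1 ⊢
        linear_combination -E1
      have hBre : B.re = J - (1 - 1/2) * ‖u (1/2)‖^2 + (1 - y) * ‖u y‖^2 := by
        rw [hBval, Complex.ofReal_re]
      have hBnorm : B.re ≤ ‖B‖ := by
        calc B.re ≤ |B.re| := le_abs_self _
          _ ≤ ‖B‖ := Complex.abs_re_le_norm B
          _ = ‖B‖ := rfl
      have hnormle : ‖B‖ ≤ ∫ t in (1/2:ℝ)..y, ‖((1 - t:ℝ):ℂ) * nt t‖ :=
        intervalIntegral.norm_integral_le_integral_norm hcy
      have hptbd : ∀ t ∈ Icc (1/2:ℝ) y, ‖((1 - t:ℝ):ℂ) * nt t‖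
          ≤ 2*((1-t^2)^2*‖u' t‖^2) + (1/2)*‖u t‖^2 := by
        intro t ht
        have h1t : (0:ℝ) ≤ 1 - t := by linarith [ht.2, hy.2]
        have h12 : (1/2:ℝ) ≤ t := ht.1
        have hnn : ‖nt t‖ ≤ 2 * (‖u' t‖ * ‖u t‖) := by
          rw [hnt]
          calc ‖u' t * star (u t) + u t * star (u' t)‖
              ≤ ‖u' t * star (u t)‖ + ‖u t * star (u' t)‖ := norm_add_le _ _
            _ = 2 * (‖u' t‖ * ‖u t‖) := by
                rw [norm_mul, norm_mul, norm_star, norm_star]; ring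
        have hsq : (1-t)^2 ≤ (1-t^2)^2 := by nlinarith [sq_nonneg (1-t)]
        calc ‖((1 - t:ℝ):ℂ) * nt t‖ = |1 - t| * ‖nt t‖ := by
              rw [norm_mul, Complex.norm_real, Real.norm_eq_abs]
          _ ≤ (1 - t) * (2 * (‖u' t‖ * ‖u t‖)) := by
              rw [abs_of_nonneg h1t]; exact mul_le_mul_of_nonneg_left hnn h1t
          _ ≤ 2*((1-t^2)^2*‖u' t‖^2) + (1/2)*‖u t‖^2 := by
              nlinarith [sq_nonneg (2*((1-t)*‖u' t‖) - ‖u t‖), norm_nonneg (u' t),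
                norm_nonneg (u t), mul_le_mul_of_nonneg_right hsq (sq_nonneg ‖u' t‖),
                mul_nonneg (mul_nonneg h1t (norm_nonneg (u' t))) (norm_nonneg (u t))]
      have hRint1 : IntervalIntegrable (fun t => 2*((1-t^2)^2*‖u' t‖^2)) volume (1/2) y := by
        rw [intervalIntegrable_iff_integrableOn_Ioc_of_le hcy]
        exact (Hu'.mono_set (fun t ht => hIooSub (Ioc_subset_Ioo_right hy.2 ht))).const_mul 2
      have hRint2 : IntervalIntegrable (fun t => (1/2)*‖u t‖^2) volume (1/2) y := by
        rw [intervalIntegrable_iff_integrableOn_Ioc_of_le hcy]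
        exact ((((hcu.mono hsubIcc2).norm.pow 2).integrableOn_Icc).mono_set
          Ioc_subset_Icc_self).const_mul (1/2)
      have hmono1 : (∫ t in (1/2:ℝ)..y, ‖((1 - t:ℝ):ℂ) * nt t‖)
          ≤ ∫ t in (1/2:ℝ)..y, (2*((1-t^2)^2*‖u' t‖^2) + (1/2)*‖u t‖^2) :=
        intervalIntegral.integral_mono_on hcy hterm2.norm (hRint1.add hRint2) hptbd
      have hsplit2 : (∫ t in (1/2:ℝ)..y, (2*((1-t^2)^2*‖u' t‖^2) + (1/2)*‖u t‖^2))
          = 2*(∫ t in (1/2:ℝ)..y, (1-t^2)^2*‖u' t‖^2) + (1/2)*J := by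
        rw [hJ, intervalIntegral.integral_add hRint1 hRint2,
          intervalIntegral.integral_const_mul, intervalIntegral.integral_const_mul]
      have hKle : (∫ t in (1/2:ℝ)..y, (1-t^2)^2*‖u' t‖^2) ≤ K := by
        rw [intervalIntegral.integral_of_le hcy, hK]
        refine setIntegral_mono_set (Hu'.mono_set hIooSub) ?_ ?_
        · exact Filter.Eventually.of_forall fun x => by positivity
        · exact (Ioc_subset_Ioo_right hy.2).eventuallyLE
      have h0 : (0:ℝ) ≤ (1 - y) * ‖u y‖^2 :=
        mul_nonneg (by linarith [hy.2]) (sq_nonneg _)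
      have hnorm_eq : (∫ x in Ioc (1/2:ℝ) y, ‖(‖u x‖^2)‖) = J := by
        rw [hJ, intervalIntegral.integral_of_le hcy]
        refine setIntegral_congr_fun measurableSet_Ioc fun x hx => ?_
        simp [norm_pow, norm_norm]
      rw [hnorm_eq]
      linarith [hBre, hBnorm, hnormle, hmono1, hsplit2, hKle, h0]
    exact myIntegrableOn (by norm_num) hfi hbound
  -- integrability of h near 1
  have hIntH : IntegrableOn h (Ioo (1/2:ℝ) 1) volume := by
    set M : ℝ → ℝ := fun t => (‖u t‖^2 + ‖v t‖^2) + ((1-t^2)^2*‖u' t‖^2 + ‖v t‖^2)/2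
      + ((1-t^2)*‖u t‖^2 + (1-t^2)*‖v' t‖^2)/2 with hM
    have hMint : IntegrableOn M (Ioo (1/2:ℝ) 1) volume := by
      refine Integrable.add (Integrable.add ?_ ?_) ?_
      · exact Ju.add (Hv.mono_set hIooSub)
      · exact ((Hu'.mono_set hIooSub).add (Hv.mono_set hIooSub)).div_const 2
      · exact ((Hu.mono_set hIooSub).add (Hv'.mono_set hIooSub)).div_const 2
    have hfiH : ∀ y ∈ Ioo (1/2:ℝ) 1, IntegrableOn h (Ioc (1/2:ℝ) y) volume := by
      intro y hy
      have hymem : y ∈ Ioo (-1:ℝ) 1 := hIooSub hy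
      have hcy : (1/2:ℝ) ≤ y := hy.1.le
      have hii : IntervalIntegrable h volume (1/2) y := by
        rw [hh]
        refine IntervalIntegrable.add ?_ ?_
        · apply ContinuousOn.intervalIntegrable
          rw [uIcc_of_le hcy]
          refine ContinuousOn.mul ?_ ?_
          · exact (Complex.continuous_ofReal.comp
              (continuous_const.mul continuous_id)).continuousOn
          · rw [hm]
            exact (hcu.mono (hIccsub hy.2)).mul ((hcv.mono (hIccsub hy.2)).star)
        · apply (hm'ii y hymem hcy).continuousOn_mul
          exact Complex.continuous_ofReal.comp_continuousOn
            ((continuous_const.sub (continuous_pow 2)).continuousOn)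
      exact (intervalIntegrable_iff_integrableOn_Ioc_of_le hcy).1 hii
    have hboundH : ∀ y ∈ Ioo (1/2:ℝ) 1,
        (∫ x in Ioc (1/2:ℝ) y, ‖h x‖) ≤ ∫ x in Ioo (1/2:ℝ) 1, M x := by
      intro y hy
      have hcy : (1/2:ℝ) ≤ y := hy.1.le
      have hptH : ∀ t ∈ Ioc (1/2:ℝ) y, ‖h t‖ ≤ M t := by
        intro t ht
        have ht1 : (1/2:ℝ) < t := ht.1
        have ht2 : t < 1 := lt_of_le_of_lt ht.2 hy.2
        have hs : (0:ℝ) < 1 - t^2 := by nlinarith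
        have hta : |(-2*t : ℝ)| ≤ 2 := by
          rw [abs_of_nonpos (by linarith)]; linarith
        have hmb : ‖m t‖ = ‖u t‖*‖v t‖ := by rw [hm]; rw [norm_mul, norm_star]
        have hm'b : ‖m' t‖ ≤ ‖u' t‖*‖v t‖ + ‖u t‖*‖v' t‖ := by
          rw [hm']
          calc ‖u' t * star (v t) + u t * star (v' t)‖
              ≤ ‖u' t * star (v t)‖ + ‖u t * star (v' t)‖ := norm_add_le _ _
            _ = ‖u' t‖*‖v t‖ + ‖u t‖*‖v' t‖ := by
                rw [norm_mul, norm_mul, norm_star, norm_star]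
        have hcalc : ‖h t‖ ≤ 2*(‖u t‖*‖v t‖) + (1-t^2)*(‖u' t‖*‖v t‖ + ‖u t‖*‖v' t‖) := by
          rw [hh]
          calc ‖((-2*t:ℝ):ℂ) * m t + ((1-t^2:ℝ):ℂ) * m' t‖
              ≤ ‖((-2*t:ℝ):ℂ) * m t‖ + ‖((1-t^2:ℝ):ℂ) * m' t‖ := norm_add_le _ _
            _ = |(-2*t:ℝ)| * ‖m t‖ + |1-t^2| * ‖m' t‖ := by
                congr 1 <;> rw [norm_mul, Complex.norm_real, Real.norm_eq_abs]
            _ ≤ 2 * (‖u t‖*‖v t‖) + (1-t^2) * (‖u' t‖*‖v t‖ + ‖u t‖*‖v' t‖) := by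
                rw [hmb, abs_of_pos hs]
                refine add_le_add ?_ ?_
                · exact mul_le_mul_of_nonneg_right hta
                    (mul_nonneg (norm_nonneg _) (norm_nonneg _))
                · exact mul_le_mul_of_nonneg_left hm'b hs.le
        have hM_ge : 2*(‖u t‖*‖v t‖) + (1-t^2)*(‖u' t‖*‖v t‖ + ‖u t‖*‖v' t‖) ≤ M t := by
          rw [hM]
          have e1 : 2*(‖u t‖*‖v t‖) ≤ ‖u t‖^2 + ‖v t‖^2 := by
            nlinarith [sq_nonneg (‖u t‖ - ‖v t‖)]
          have e2 : (1-t^2)*(‖u' t‖*‖v t‖) ≤ ((1-t^2)^2*‖u' t‖^2 + ‖v t‖^2)/2 := by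
            nlinarith [sq_nonneg ((1-t^2)*‖u' t‖ - ‖v t‖)]
          have e3 : (1-t^2)*(‖u t‖*‖v' t‖) ≤ ((1-t^2)*‖u t‖^2 + (1-t^2)*‖v' t‖^2)/2 := by
            nlinarith [mul_nonneg hs.le (sq_nonneg (‖u t‖ - ‖v' t‖))]
          nlinarith [e1, e2, e3]
        exact le_trans hcalc hM_ge
      calc (∫ x in Ioc (1/2:ℝ) y, ‖h x‖) ≤ ∫ x in Ioc (1/2:ℝ) y, M x :=
            setIntegral_mono_on (hfiH y hy).norm
              (hMint.mono_set (Ioc_subset_Ioo_right hy.2)) measurableSet_Ioc hptH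
        _ ≤ ∫ x in Ioo (1/2:ℝ) 1, M x := by
            refine setIntegral_mono_set hMint ?_ (Ioc_subset_Ioo_right hy.2).eventuallyLE
            refine Filter.eventually_of_mem (self_mem_ae_restrict measurableSet_Ioo)
              fun t ht => ?_
            have hs : (0:ℝ) ≤ 1 - t^2 := by nlinarith [ht.1, ht.2]
            have k1 : (0:ℝ) ≤ (1-t^2)*‖u t‖^2 := mul_nonneg hs (sq_nonneg _)
            have k2 : (0:ℝ) ≤ (1-t^2)*‖v' t‖^2 := mul_nonneg hs (sq_nonneg _)
            have k3 : (0:ℝ) ≤ (1-t^2)^2*‖u' t‖^2 := mul_nonneg (sq_nonneg _) (sq_nonneg _)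
            have k4 := sq_nonneg ‖u t‖
            have k5 := sq_nonneg ‖v t‖
            simp only [Pi.zero_apply, hM]
            linarith
    exact myIntegrableOn (by norm_num) hfiH hboundH
  -- h is integrable up to 1, so P has a limit L at 1⁻
  have hIender : IntegrableOn h (Ioc (1/2:ℝ) 1) volume := by
    rw [IntegrableOn, ← Measure.restrict_congr_set Ioo_ae_eq_Ioc]
    exact hIntH
  have hii1 : IntervalIntegrable h volume (1/2) 1 :=
    (intervalIntegrable_iff_integrableOn_Ioc_of_le (by norm_num)).2 hIender
  have hcont1 : ContinuousWithinAt (fun y => ∫ t in (1/2:ℝ)..y, h t) (Icc (1/2:ℝ) 1) 1 := by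
    apply intervalIntegral.continuousWithinAt_primitive (measure_singleton 1)
    rw [min_self, max_eq_right (by norm_num : (1/2:ℝ) ≤ 1)]
    exact hii1
  have hIools : 𝓝[Ioo (1/2:ℝ) 1] (1:ℝ) = 𝓝[<] 1 :=
    nhdsWithin_Ioo_eq_nhdsLT (by norm_num)
  have htendF : Tendsto (fun y => ∫ t in (1/2:ℝ)..y, h t) (𝓝[<] (1:ℝ))
      (𝓝 (∫ t in (1/2:ℝ)..(1:ℝ), h t)) := by
    rw [← hIools]
    exact (hcont1.tendsto).mono_left (nhdsWithin_mono 1 Ioo_subset_Icc_self)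
  have htendP : Tendsto P (𝓝[<] (1:ℝ)) (𝓝 (P (1/2) + ∫ t in (1/2:ℝ)..(1:ℝ), h t)) := by
    refine Tendsto.congr' ?_ (tendsto_const_nhds.add htendF)
    have hmem : Ioo (1/2:ℝ) 1 ∈ 𝓝[<] (1:ℝ) := by
      rw [← hIools]; exact self_mem_nhdsWithin
    filter_upwards [hmem] with y hy
    have := hPrep y (hIooSub hy) hy.1.le
    linear_combination -this
  set L : ℂ := P (1/2) + ∫ t in (1/2:ℝ)..(1:ℝ), h t with hLdef
  -- the limit L must be zero
  have hL0 : L = 0 := by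
    by_contra hL
    have hnL : 0 < ‖L‖ := norm_pos_iff.2 hL
    have hev : ∀ᶠ x in 𝓝[<] (1:ℝ), ‖L‖/2 ≤ ‖P x‖ ∧ x ∈ Ioo (1/2:ℝ) 1 := by
      refine Filter.Eventually.and ?_ ?_
      · exact (htendP.norm).eventually (eventually_ge_nhds (by linarith))
      · rw [← hIools]; exact eventually_mem_nhdsWithin
    obtain ⟨x₀, hx₀lt, hx₀⟩ := mem_nhdsLT_iff_exists_Ioo_subset.1 hev
    set x₁ : ℝ := max x₀ (1/2:ℝ) with hx₁
    have hx1lt : x₁ < 1 := max_lt hx₀lt (by norm_num)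
    have hsub1 : Ioo x₁ 1 ⊆ Ioo x₀ 1 := fun t ht =>
      ⟨lt_of_le_of_lt (le_max_left _ _) ht.1, ht.2⟩
    have hprop : ∀ t ∈ Ioo x₁ 1, ‖L‖/2 ≤ ‖P t‖ ∧ t ∈ Ioo (1/2:ℝ) 1 := fun t ht =>
      hx₀ (hsub1 ht)
    have hsub2 : Ioo x₁ 1 ⊆ Ioo (1/2:ℝ) 1 := fun t ht =>
      ⟨lt_of_le_of_lt (le_max_right _ _) ht.1, ht.2⟩
    have hmaj : IntegrableOn (fun x => ‖u x‖ * ‖v x‖) (Ioo x₁ 1) volume := by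
      refine Integrable.mono' ((Ju.mono_set hsub2).add (Hv.mono_set (hsub2.trans hIooSub)))
        ?_ ?_
      · exact ((hcu.mono (hsub2.trans hIooSub)).norm.mul
          ((hcv.mono (hsub2.trans hIooSub)).norm)).aestronglyMeasurable measurableSet_Ioo
      · refine Filter.Eventually.of_forall fun x => ?_
        simp only [Pi.add_apply]
        rw [Real.norm_eq_abs, abs_of_nonneg (mul_nonneg (norm_nonneg _) (norm_nonneg _))]
        nlinarith [sq_nonneg (‖u x‖ - ‖v x‖)]
    have hinv : IntegrableOn (fun x => (1-x)⁻¹) (Ioo x₁ 1) volume := by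
      refine Integrable.mono' (hmaj.const_mul (4/‖L‖)) ?_ ?_
      · refine ContinuousOn.aestronglyMeasurable ?_ measurableSet_Ioo
        refine ContinuousOn.inv₀ ((continuous_const.sub continuous_id).continuousOn) ?_
        intro x hx
        have : (0:ℝ) < 1 - x := by linarith [hx.2]
        exact ne_of_gt this
      · refine Filter.eventually_of_mem (self_mem_ae_restrict measurableSet_Ioo)
          fun x hx => ?_
        obtain ⟨hPx, hx2⟩ := hprop x hx
        have h1x : (0:ℝ) < 1 - x := by linarith [hx.2]
        have hx0 : (0:ℝ) < x := by linarith [hx2.1]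
        have hx2lt : x < 1 := hx2.2
        have hs : (0:ℝ) < 1 - x^2 := by nlinarith
        have hPnorm : ‖P x‖ = (1-x^2) * (‖u x‖ * ‖v x‖) := by
          rw [hP]
          rw [norm_mul, norm_mul, Complex.norm_real, Real.norm_eq_abs, norm_star,
            abs_of_pos hs]
          ring
        rw [Real.norm_eq_abs, abs_of_pos (inv_pos.2 h1x)]
        have hkey : ‖L‖/2 ≤ (1-x^2)*(‖u x‖*‖v x‖) := by rw [← hPnorm]; exact hPx
        have hab : 0 ≤ ‖u x‖*‖v x‖ := mul_nonneg (norm_nonneg _) (norm_nonneg _)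
        have h3 : ‖L‖/2 ≤ 2*(1-x)*(‖u x‖*‖v x‖) := by nlinarith
        rw [inv_eq_one_div, div_le_iff₀ h1x]
        rw [show (4:ℝ)/‖L‖ * (‖u x‖*‖v x‖) * (1-x) = (4*((1-x)*(‖u x‖*‖v x‖)))/‖L‖ by ring]
        rw [le_div_iff₀ hnL]
        nlinarith [h3]
    have hioc : IntegrableOn (fun x => (x-1)⁻¹) (Ioc x₁ 1) volume := by
      have h1 : IntegrableOn (fun x => (x-1)⁻¹) (Ioo x₁ 1) volume := by
        refine IntegrableOn.congr_fun hinv.neg (fun x hx => ?_) measurableSet_Ioo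
        simp only [Pi.neg_apply]
        rw [show x - 1 = -(1-x) by ring, inv_neg]
      rw [IntegrableOn, ← Measure.restrict_congr_set Ioo_ae_eq_Ioc]
      exact h1
    have hcontra : IntervalIntegrable (fun x => (x-1)⁻¹) volume x₁ 1 :=
      (intervalIntegrable_iff_integrableOn_Ioc_of_le hx1lt.le).2 hioc
    rw [intervalIntegrable_sub_inv_iff] at hcontra
    rcases hcontra with h1 | h1
    · exact absurd h1 (ne_of_lt hx1lt)
    · exact h1 right_mem_uIcc
  rw [hL0] at htendP
  exact htendP


/-- For `f, g ∈ V₃`, `(1-x²) f''(x) conj(g'(x)) → 0` as `x → 1⁻` and as `x → -1⁺`. -/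
theorem V3_boundary_term_vanishes (k : ℝ) (hk : 0 < k)
    (f f' f'' f''' g g' g'' g''' : ℝ → ℂ)
    (hf : InV3 f f' f'' f''') (hg : InV3 g g' g'' g''') :
    Tendsto (fun x => ((1 - x ^ 2 : ℝ) : ℂ) * f'' x * star (g' x)) (𝓝[<] (1 : ℝ)) (𝓝 0) ∧
    Tendsto (fun x => ((1 - x ^ 2 : ℝ) : ℂ) * f'' x * star (g' x)) (𝓝[>] (-1 : ℝ)) (𝓝 0) := by
  obtain ⟨hf1, hf2, hf3, hf4, hf5, hf6, hf7, hf8, hf9, hf10⟩ := hf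
  obtain ⟨hg1, hg2, hg3, hg4, hg5, hg6, hg7, hg8, hg9, hg10⟩ := hg
  constructor
  · exact key f'' f''' g' g'' hf3 hg2 hf6 hg5 hf7 hf8 hg8 hg9
  · have hneg : ∀ {x : ℝ}, x ∈ Ioo (-1:ℝ) 1 → -x ∈ Ioo (-1:ℝ) 1 := fun {x} hx =>
      ⟨by linarith [hx.2], by linarith [hx.1]⟩
    have hui : ∀ x ∈ Ioo (-1:ℝ) 1, ∀ y ∈ Ioo (-1:ℝ) 1,
        IntervalIntegrable (fun x => -f''' (-x)) volume x y := by
      intro x hx y hy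
      exact (by simpa using ((IntervalIntegrable.iff_comp_neg (by simp)).mp (hf3 (-y) (hneg hy) (-x) (hneg hx))).symm : IntervalIntegrable (fun x => f''' (-x)) volume x y).neg
    have hvi : ∀ x ∈ Ioo (-1:ℝ) 1, ∀ y ∈ Ioo (-1:ℝ) 1,
        IntervalIntegrable (fun x => g'' (-x)) volume x y := by
      intro x hx y hy
      simpa using ((IntervalIntegrable.iff_comp_neg (by simp)).mp (hg2 (-y) (hneg hy) (-x) (hneg hx))).symm
    have hur : ∀ x ∈ Ioo (-1:ℝ) 1, ∀ y ∈ Ioo (-1:ℝ) 1,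
        (fun x => f'' (-x)) y - (fun x => f'' (-x)) x = ∫ t in x..y, -f''' (-t) := by
      intro x hx y hy
      simp only
      rw [intervalIntegral.integral_neg, intervalIntegral.integral_comp_neg]
      have h1 := hf6 (-x) (hneg hx) (-y) (hneg hy)
      have h2 := intervalIntegral.integral_symm (a := -x) (b := -y) (f := f''') (μ := volume)
      linear_combination h1 + h2
    have hvr : ∀ x ∈ Ioo (-1:ℝ) 1, ∀ y ∈ Ioo (-1:ℝ) 1,
        (fun x => -g' (-x)) y - (fun x => -g' (-x)) x = ∫ t in x..y, g'' (-t) := by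
      intro x hx y hy
      simp only
      rw [intervalIntegral.integral_comp_neg]
      have h1 := hg5 (-x) (hneg hx) (-y) (hneg hy)
      have h2 := intervalIntegral.integral_symm (a := -x) (b := -y) (f := g'') (μ := volume)
      linear_combination -h1 - h2
    have HU' : IntegrableOn (fun x => (1 - x ^ 2) ^ 2 * ‖-f''' (-x)‖ ^ 2) (Ioo (-1:ℝ) 1) := by
      refine (refl_integrableOn hf7).congr_fun (fun x hx => ?_) measurableSet_Ioo
      simp only [neg_sq, norm_neg]
    have HU : IntegrableOn (fun x => (1 - x ^ 2) * ‖f'' (-x)‖ ^ 2) (Ioo (-1:ℝ) 1) := by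
      refine (refl_integrableOn hf8).congr_fun (fun x hx => ?_) measurableSet_Ioo
      simp only [neg_sq]
    have HV' : IntegrableOn (fun x => (1 - x ^ 2) * ‖g'' (-x)‖ ^ 2) (Ioo (-1:ℝ) 1) := by
      refine (refl_integrableOn hg8).congr_fun (fun x hx => ?_) measurableSet_Ioo
      simp only [neg_sq]
    have HV : IntegrableOn (fun x => ‖-g' (-x)‖ ^ 2) (Ioo (-1:ℝ) 1) := by
      refine (refl_integrableOn hg9).congr_fun (fun x hx => ?_) measurableSet_Ioo
      simp only [norm_neg]
    have htend := key (fun x => f'' (-x)) (fun x => -f''' (-x))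
      (fun x => -g' (-x)) (fun x => g'' (-x)) hui hvi hur hvr HU' HU HV' HV
    have hnegt : Tendsto (fun x : ℝ => -x) (𝓝[>] (-1:ℝ)) (𝓝[<] (1:ℝ)) := by
      apply tendsto_nhdsWithin_of_tendsto_nhds_of_eventually_within
      · have h0 : Tendsto (fun x : ℝ => -x) (𝓝 (-1:ℝ)) (𝓝 (1:ℝ)) := by
          simpa using (continuous_neg.tendsto (-1:ℝ))
        exact h0.mono_left nhdsWithin_le_nhds
      · refine eventually_nhdsWithin_of_forall fun x hx => ?_
        simp only [mem_Iio]
        have : (-1:ℝ) < x := hx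
        linarith
    have hfinal := (htend.comp hnegt).neg
    simp only [Function.comp, neg_neg, neg_sq, star_neg, mul_neg, neg_zero] at hfinal
    exact hfinal
end

section
/- Suppose f:[-1,1]→ℂ satisfies f ∈ AC[-1,1], f' and f'' ∈ AC_loc(-1,1), and (1-x²)f''' ∈ L²(-1,1). Then automatically (1-x²)^{1/2}f'' ∈ L²(-1,1) and f' ∈ L²(-1,1). -/
open MeasureTheory Set intervalIntegral


lemma aux_int_wsq {x : ℝ} (hx : x ∈ Set.Ioo (-1:ℝ) 1) :
    |∫ t in (0:ℝ)..x, (((1-t^2)^2)⁻¹ : ℝ)| ≤ 2 / (1 - x^2) := by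
  obtain ⟨hx1, hx2⟩ := hx
  have h1x : 0 < 1 - x^2 := by nlinarith
  rcases le_total 0 x with h0 | h0
  · have hsub : Set.uIcc (0:ℝ) x = Set.Icc 0 x := Set.uIcc_of_le h0
    have hcont : ContinuousOn (fun t : ℝ => (((1-t^2)^2)⁻¹ : ℝ)) (Set.uIcc 0 x) := by
      apply ContinuousOn.inv₀ (by fun_prop)
      intro t ht
      rw [hsub] at ht
      have : 0 < 1 - t^2 := by nlinarith [ht.1, ht.2]
      positivity
    have hcont2 : ContinuousOn (fun t : ℝ => (((1-t)^2)⁻¹ : ℝ)) (Set.uIcc 0 x) := by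
      apply ContinuousOn.inv₀ (by fun_prop)
      intro t ht
      rw [hsub] at ht
      have : 0 < 1 - t := by nlinarith [ht.1, ht.2]
      positivity
    have hi1 : IntervalIntegrable (fun t : ℝ => (((1-t^2)^2)⁻¹ : ℝ)) volume 0 x :=
      hcont.intervalIntegrable
    have hi2 : IntervalIntegrable (fun t : ℝ => (((1-t)^2)⁻¹ : ℝ)) volume 0 x :=
      hcont2.intervalIntegrable
    have hmono : (∫ t in (0:ℝ)..x, (((1-t^2)^2)⁻¹ : ℝ)) ≤
        ∫ t in (0:ℝ)..x, (((1-t)^2)⁻¹ : ℝ) := by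
      apply integral_mono_on h0 hi1 hi2
      intro t ht
      have hA : 0 < 1 - t := by nlinarith [ht.1, ht.2]
      have hB : 0 < 1 - t^2 := by nlinarith [ht.1, ht.2]
      apply inv_anti₀ (by positivity)
      nlinarith [ht.1, ht.2]
    have hftc : (∫ t in (0:ℝ)..x, (((1-t)^2)⁻¹ : ℝ)) = (1-x)⁻¹ - (1-(0:ℝ))⁻¹ := by
      apply integral_eq_sub_of_hasDerivAt (f := fun t : ℝ => (1-t)⁻¹)
      · intro t ht
        rw [hsub] at ht
        have hA : (1:ℝ) - t ≠ 0 := by nlinarith [ht.1, ht.2]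
        have := ((hasDerivAt_id t).const_sub 1).inv hA
        convert this using 1
        · rfl
        · rfl
        · simp only [id_eq]; ring
      · exact hi2
    have hnn : 0 ≤ ∫ t in (0:ℝ)..x, (((1-t^2)^2)⁻¹ : ℝ) := by
      apply integral_nonneg h0
      intro t _; positivity
    rw [abs_of_nonneg hnn]
    have h1 : 0 < 1 - x := by linarith
    have e1 : (1-x) * (1-x)⁻¹ = 1 := mul_inv_cancel₀ h1.ne'
    have e2 : (1-x^2) * (1-x^2)⁻¹ = 1 := mul_inv_cancel₀ h1x.ne'
    have p1 : 0 < (1-x)⁻¹ := inv_pos.mpr h1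
    have p2 : 0 < (1-x^2)⁻¹ := inv_pos.mpr h1x
    rw [div_eq_mul_inv]
    nlinarith [mul_pos p1 p2, mul_pos h1x p2, mul_pos h1 p1]
  · have hsub : Set.uIcc x (0:ℝ) = Set.Icc x 0 := Set.uIcc_of_le h0
    have hcont : ContinuousOn (fun t : ℝ => (((1-t^2)^2)⁻¹ : ℝ)) (Set.uIcc x 0) := by
      apply ContinuousOn.inv₀ (by fun_prop)
      intro t ht
      rw [hsub] at ht
      have : 0 < 1 - t^2 := by nlinarith [ht.1, ht.2]
      positivity
    have hcont2 : ContinuousOn (fun t : ℝ => (((1+t)^2)⁻¹ : ℝ)) (Set.uIcc x 0) := by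
      apply ContinuousOn.inv₀ (by fun_prop)
      intro t ht
      rw [hsub] at ht
      have : 0 < 1 + t := by nlinarith [ht.1, ht.2]
      positivity
    have hi1 : IntervalIntegrable (fun t : ℝ => (((1-t^2)^2)⁻¹ : ℝ)) volume x 0 :=
      hcont.intervalIntegrable
    have hi2 : IntervalIntegrable (fun t : ℝ => (((1+t)^2)⁻¹ : ℝ)) volume x 0 :=
      hcont2.intervalIntegrable
    have hmono : (∫ t in x..(0:ℝ), (((1-t^2)^2)⁻¹ : ℝ)) ≤
        ∫ t in x..(0:ℝ), (((1+t)^2)⁻¹ : ℝ) := by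
      apply integral_mono_on h0 hi1 hi2
      intro t ht
      have hA : 0 < 1 + t := by nlinarith [ht.1, ht.2]
      have hB : 0 < 1 - t^2 := by nlinarith [ht.1, ht.2]
      apply inv_anti₀ (by positivity)
      nlinarith [ht.1, ht.2]
    have hftc : (∫ t in x..(0:ℝ), (((1+t)^2)⁻¹ : ℝ)) = -(1+(0:ℝ))⁻¹ - (-(1+x)⁻¹) := by
      apply integral_eq_sub_of_hasDerivAt (f := fun t : ℝ => -(1+t)⁻¹)
      · intro t ht
        rw [hsub] at ht
        have hA : (1:ℝ) + t ≠ 0 := by nlinarith [ht.1, ht.2]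
        have := (((hasDerivAt_id t).const_add 1).inv hA).neg
        convert this using 1
        · rfl
        · simp only [id_eq]; ring
      · exact hi2
    have hnn : 0 ≤ ∫ t in x..(0:ℝ), (((1-t^2)^2)⁻¹ : ℝ) := by
      apply integral_nonneg h0
      intro t _; positivity
    rw [integral_symm, abs_neg, abs_of_nonneg hnn]
    have h1 : 0 < 1 + x := by linarith
    have e1 : (1+x) * (1+x)⁻¹ = 1 := mul_inv_cancel₀ h1.ne'
    have e2 : (1-x^2) * (1-x^2)⁻¹ = 1 := mul_inv_cancel₀ h1x.ne'
    have p1 : 0 < (1+x)⁻¹ := inv_pos.mpr h1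
    have p2 : 0 < (1-x^2)⁻¹ := inv_pos.mpr h1x
    rw [div_eq_mul_inv]
    nlinarith [mul_pos p1 p2, mul_pos h1x p2, mul_pos h1 p1]

lemma aux_int_arcsin {x : ℝ} (hx : x ∈ Set.Ioo (-1:ℝ) 1) :
    |∫ t in (0:ℝ)..x, ((Real.sqrt (1-t^2))⁻¹ : ℝ)| ≤ 2 := by
  obtain ⟨hx1, hx2⟩ := hx
  have hIcc : Set.uIcc (0:ℝ) x ⊆ Set.Ioo (-1:ℝ) 1 := by
    rcases le_total 0 x with h0 | h0
    · rw [Set.uIcc_of_le h0]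
      intro t ht; exact ⟨by nlinarith [ht.1], by nlinarith [ht.2]⟩
    · rw [Set.uIcc_of_ge h0]
      intro t ht; exact ⟨by nlinarith [ht.1], by nlinarith [ht.2]⟩
  have hcont : ContinuousOn (fun t : ℝ => ((Real.sqrt (1-t^2))⁻¹ : ℝ)) (Set.uIcc 0 x) := by
    apply ContinuousOn.inv₀ (by fun_prop)
    intro t ht
    have ht' := hIcc ht
    have : 0 < 1 - t^2 := by nlinarith [ht'.1, ht'.2]
    positivity
  have hftc : (∫ t in (0:ℝ)..x, ((Real.sqrt (1-t^2))⁻¹ : ℝ)) =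
      Real.arcsin x - Real.arcsin 0 := by
    apply integral_eq_sub_of_hasDerivAt
    · intro t ht
      have ht' := hIcc ht
      have := Real.hasDerivAt_arcsin (by linarith [ht'.1] : t ≠ -1)
        (by linarith [ht'.2] : t ≠ 1)
      rw [one_div] at this; exact this
    · exact hcont.intervalIntegrable
  rw [hftc, Real.arcsin_zero, sub_zero, abs_le]
  constructor
  · nlinarith [Real.neg_pi_div_two_le_arcsin x, Real.pi_le_four]
  · nlinarith [Real.arcsin_le_pi_div_two x, Real.pi_le_four]
lemma aux_amgm {c w n : ℝ} (hc : 0 < c) (hw : 0 < w) (hn : 0 ≤ n) :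
    n ≤ (c * (w^2 * n^2) + (w^2)⁻¹/c)/2 := by
  rw [le_div_iff₀ (by norm_num : (0:ℝ) < 2), ← sub_nonneg]
  have hid : c * (w^2 * n^2) + (w^2)⁻¹/c - n*2 = (c*w^2*n - 1)^2 / (c*w^2) := by
    field_simp
    ring
  rw [hid]
  positivity

lemma aux_keyA (f''' : ℝ → ℂ)
    (hloc : ∀ x ∈ Set.Ioo (-1:ℝ) 1, ∀ y ∈ Set.Ioo (-1:ℝ) 1, IntervalIntegrable f''' volume x y)
    (hL2 : IntegrableOn (fun x => (1 - x ^ 2) ^ 2 * ‖f''' x‖ ^ 2) (Set.Ioo (-1 : ℝ) 1))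
    {x : ℝ} (hx : x ∈ Set.Ioo (-1:ℝ) 1) :
    |∫ t in (0:ℝ)..x, ‖f''' t‖| ≤
      2 * ((∫ t in Set.Ioo (-1:ℝ) 1, (1 - t ^ 2) ^ 2 * ‖f''' t‖ ^ 2) + 1) /
        Real.sqrt (1 - x^2) := by
  have h0 : (0:ℝ) ∈ Set.Ioo (-1:ℝ) 1 := by norm_num
  obtain ⟨M2, hM2def⟩ : ∃ M2 : ℝ, (∫ t in Set.Ioo (-1:ℝ) 1, (1 - t ^ 2) ^ 2 * ‖f''' t‖ ^ 2) = M2 :=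
    ⟨_, rfl⟩
  rw [hM2def]
  have hM2 : 0 ≤ M2 := hM2def ▸ setIntegral_nonneg measurableSet_Ioo (fun t _ => by positivity)
  have h1x : 0 < 1 - x^2 := by nlinarith [hx.1, hx.2]
  obtain ⟨s, hsdef⟩ : ∃ s : ℝ, Real.sqrt (1 - x^2) = s := ⟨_, rfl⟩
  rw [hsdef]
  have hs : 0 < s := hsdef ▸ Real.sqrt_pos.mpr h1x
  have hss : s^2 = 1 - x^2 := by rw [← hsdef]; exact Real.sq_sqrt h1x.le
  obtain ⟨c, hcdef⟩ : ∃ c : ℝ, ((M2+1)*s)⁻¹ = c := ⟨_, rfl⟩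
  have hc : 0 < c := hcdef ▸ by positivity
  have huI : Set.uIcc (0:ℝ) x ⊆ Set.Ioo (-1:ℝ) 1 :=
    Set.ordConnected_Ioo.uIcc_subset h0 hx
  have huIo : Set.uIoc (0:ℝ) x ⊆ Set.Ioo (-1:ℝ) 1 :=
    Set.ordConnected_Ioo.uIoc_subset h0 hx
  have hIntN : IntervalIntegrable (fun t => ‖f''' t‖) volume 0 x := (hloc 0 h0 x hx).norm
  have hIntA : IntervalIntegrable (fun t => (1-t^2)^2 * ‖f''' t‖^2) volume 0 x := by
    rw [intervalIntegrable_iff]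
    exact hL2.mono_set huIo
  have hIntB : IntervalIntegrable (fun t => (((1-t^2)^2)⁻¹ : ℝ)) volume 0 x := by
    apply ContinuousOn.intervalIntegrable
    apply ContinuousOn.inv₀ (by fun_prop)
    intro t ht
    have ht' := huI ht
    have : 0 < 1 - t^2 := by nlinarith [ht'.1, ht'.2]
    positivity
  have hIntg : IntervalIntegrable
      (fun t => (c * ((1-t^2)^2 * ‖f''' t‖^2) + ((1-t^2)^2)⁻¹/c)/2) volume 0 x :=
    ((hIntA.const_mul c).add (hIntB.div_const c)).div_const 2
  have hpt : ∀ t ∈ Set.uIcc (0:ℝ) x,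
      ‖f''' t‖ ≤ (c * ((1-t^2)^2 * ‖f''' t‖^2) + ((1-t^2)^2)⁻¹/c)/2 := by
    intro t ht
    have ht' := huI ht
    have hw : 0 < 1 - t^2 := by nlinarith [ht'.1, ht'.2]
    exact aux_amgm hc hw (norm_nonneg _)
  have hB : (∫ t in (0:ℝ)..x, (((1-t^2)^2)⁻¹ : ℝ)) ≤ 2/(1-x^2) :=
    le_trans (le_abs_self _) (aux_int_wsq hx)
  have hBneg : -(2/(1-x^2)) ≤ (∫ t in (0:ℝ)..x, (((1-t^2)^2)⁻¹ : ℝ)) :=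
    neg_le_of_abs_le (aux_int_wsq hx)
  have hfin : (c * M2 + (2/(1-x^2))/c)/2 ≤ 2*(M2+1)/s := by
    have h2 : (2/(1-x^2))/c = 2*(M2+1)/s := by
      rw [← hcdef, ← hss]
      field_simp
    rw [h2]
    have h3 : c*M2 ≤ (M2+1)/s := by
      rw [← hcdef, inv_mul_eq_div, div_le_div_iff₀ (by positivity) hs]
      nlinarith [mul_le_mul_of_nonneg_right (show M2 ≤ (M2+1)*(M2+1) by nlinarith) hs.le]
    have hP : 0 ≤ (M2+1)/s := by positivity
    have h4 : 2*(M2+1)/s = 2*((M2+1)/s) := by ring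
    linarith
  rcases le_total 0 x with h0x | h0x
  · have hnn : 0 ≤ ∫ t in (0:ℝ)..x, ‖f''' t‖ :=
      integral_nonneg h0x (fun t _ => norm_nonneg _)
    rw [abs_of_nonneg hnn]
    have hmono : (∫ t in (0:ℝ)..x, ‖f''' t‖) ≤
        ∫ t in (0:ℝ)..x, (c * ((1-t^2)^2 * ‖f''' t‖^2) + ((1-t^2)^2)⁻¹/c)/2 := by
      apply integral_mono_on h0x hIntN hIntg
      intro t ht
      exact hpt t (by rwa [Set.uIcc_of_le h0x])
    have hA : (∫ t in (0:ℝ)..x, (1-t^2)^2 * ‖f''' t‖^2) ≤ M2 := by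
      rw [integral_of_le h0x, ← hM2def]
      apply setIntegral_mono_set hL2 (Filter.Eventually.of_forall (fun t => by positivity))
      exact HasSubset.Subset.eventuallyLE
        (fun t ht => ⟨by linarith [ht.1], lt_of_le_of_lt ht.2 hx.2⟩)
    calc (∫ t in (0:ℝ)..x, ‖f''' t‖)
        ≤ ∫ t in (0:ℝ)..x, (c * ((1-t^2)^2 * ‖f''' t‖^2) + ((1-t^2)^2)⁻¹/c)/2 := hmono
      _ = (c * (∫ t in (0:ℝ)..x, (1-t^2)^2 * ‖f''' t‖^2)
          + (∫ t in (0:ℝ)..x, (((1-t^2)^2)⁻¹ : ℝ))/c)/2 := by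
          rw [intervalIntegral.integral_div, intervalIntegral.integral_add
            (hIntA.const_mul c) (hIntB.div_const c), intervalIntegral.integral_const_mul,
            intervalIntegral.integral_div]
      _ ≤ (c * M2 + (2/(1-x^2))/c)/2 := by gcongr
      _ ≤ 2*(M2+1)/s := hfin
  · have hnn : 0 ≤ ∫ t in x..(0:ℝ), ‖f''' t‖ :=
      integral_nonneg h0x (fun t _ => norm_nonneg _)
    rw [integral_symm, abs_neg, abs_of_nonneg hnn]
    have hmono : (∫ t in x..(0:ℝ), ‖f''' t‖) ≤
        ∫ t in x..(0:ℝ), (c * ((1-t^2)^2 * ‖f''' t‖^2) + ((1-t^2)^2)⁻¹/c)/2 := by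
      apply integral_mono_on h0x hIntN.symm hIntg.symm
      intro t ht
      exact hpt t (by rwa [Set.uIcc_comm, Set.uIcc_of_le h0x])
    have hA : (∫ t in x..(0:ℝ), (1-t^2)^2 * ‖f''' t‖^2) ≤ M2 := by
      rw [integral_of_le h0x, ← hM2def]
      apply setIntegral_mono_set hL2 (Filter.Eventually.of_forall (fun t => by positivity))
      exact HasSubset.Subset.eventuallyLE
        (fun t ht => ⟨lt_of_lt_of_le hx.1 ht.1.le, lt_of_le_of_lt ht.2 (by norm_num)⟩)
    have hB' : (∫ t in x..(0:ℝ), (((1-t^2)^2)⁻¹ : ℝ)) ≤ 2/(1-x^2) := by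
      rw [integral_symm]
      linarith
    calc (∫ t in x..(0:ℝ), ‖f''' t‖)
        ≤ ∫ t in x..(0:ℝ), (c * ((1-t^2)^2 * ‖f''' t‖^2) + ((1-t^2)^2)⁻¹/c)/2 := hmono
      _ = (c * (∫ t in x..(0:ℝ), (1-t^2)^2 * ‖f''' t‖^2)
          + (∫ t in x..(0:ℝ), (((1-t^2)^2)⁻¹ : ℝ))/c)/2 := by
          rw [intervalIntegral.integral_div, intervalIntegral.integral_add
            (hIntA.symm.const_mul c) (hIntB.symm.div_const c),
            intervalIntegral.integral_const_mul, intervalIntegral.integral_div]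
      _ ≤ (c * M2 + (2/(1-x^2))/c)/2 := by gcongr
      _ ≤ 2*(M2+1)/s := hfin
lemma aux_f''_bound (f'' f''' : ℝ → ℂ)
    (hloc : ∀ x ∈ Set.Ioo (-1:ℝ) 1, ∀ y ∈ Set.Ioo (-1:ℝ) 1, IntervalIntegrable f''' volume x y)
    (hftc : ∀ x ∈ Set.Ioo (-1 : ℝ) 1, ∀ y ∈ Set.Ioo (-1 : ℝ) 1,
      f'' y - f'' x = ∫ t in x..y, f''' t)
    (hL2 : IntegrableOn (fun x => (1 - x ^ 2) ^ 2 * ‖f''' x‖ ^ 2) (Set.Ioo (-1 : ℝ) 1))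
    {x : ℝ} (hx : x ∈ Set.Ioo (-1:ℝ) 1) :
    Real.sqrt (1 - x^2) * ‖f'' x‖ ≤
      ‖f'' 0‖ + 2 * ((∫ t in Set.Ioo (-1:ℝ) 1, (1 - t ^ 2) ^ 2 * ‖f''' t‖ ^ 2) + 1) := by
  have h0 : (0:ℝ) ∈ Set.Ioo (-1:ℝ) 1 := by norm_num
  have hkey := aux_keyA f''' hloc hL2 hx
  obtain ⟨M2, hM2def⟩ : ∃ M2 : ℝ, (∫ t in Set.Ioo (-1:ℝ) 1, (1 - t ^ 2) ^ 2 * ‖f''' t‖ ^ 2) = M2 :=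
    ⟨_, rfl⟩
  rw [hM2def] at hkey ⊢
  have hM2 : 0 ≤ M2 := hM2def ▸ setIntegral_nonneg measurableSet_Ioo (fun t _ => by positivity)
  have h1x : 0 < 1 - x^2 := by nlinarith [hx.1, hx.2]
  have hs : 0 < Real.sqrt (1 - x^2) := Real.sqrt_pos.mpr h1x
  have hs1 : Real.sqrt (1 - x^2) ≤ 1 := by
    have := Real.sqrt_le_sqrt (show 1 - x^2 ≤ 1 by nlinarith [hx.1, hx.2])
    rwa [Real.sqrt_one] at this
  have heq := hftc 0 h0 x hx
  have hfx : f'' x = (∫ t in (0:ℝ)..x, f''' t) + f'' 0 := by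
    rw [← heq]; ring
  have hnorm : ‖f'' x‖ ≤ ‖f'' 0‖ + 2*(M2+1) / Real.sqrt (1 - x^2) := by
    calc ‖f'' x‖ = ‖(∫ t in (0:ℝ)..x, f''' t) + f'' 0‖ := by rw [← hfx]
      _ ≤ ‖∫ t in (0:ℝ)..x, f''' t‖ + ‖f'' 0‖ := norm_add_le _ _
      _ ≤ |∫ t in (0:ℝ)..x, ‖f''' t‖| + ‖f'' 0‖ := by
          linarith [intervalIntegral.norm_integral_le_abs_integral_norm
            (f := f''') (a := (0:ℝ)) (b := x) (μ := volume)]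
      _ ≤ 2*(M2+1) / Real.sqrt (1 - x^2) + ‖f'' 0‖ := by linarith
      _ = ‖f'' 0‖ + 2*(M2+1) / Real.sqrt (1 - x^2) := by ring
  calc Real.sqrt (1 - x^2) * ‖f'' x‖
      ≤ Real.sqrt (1 - x^2) * (‖f'' 0‖ + 2*(M2+1) / Real.sqrt (1 - x^2)) := by
        apply mul_le_mul_of_nonneg_left hnorm hs.le
    _ = Real.sqrt (1 - x^2) * ‖f'' 0‖ + 2*(M2+1) := by
        field_simp
    _ ≤ ‖f'' 0‖ + 2*(M2+1) := by
        nlinarith [norm_nonneg (f'' 0)]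
lemma aux_union : Set.Ioo (-1:ℝ) 1 = ⋃ n : ℕ, Set.Ioc (-1 + 1/((n:ℝ)+1)) (1 - 1/((n:ℝ)+1)) := by
  ext t
  simp only [Set.mem_Ioo, Set.mem_iUnion, Set.mem_Ioc]
  constructor
  · rintro ⟨h1, h2⟩
    obtain ⟨n, hn⟩ := exists_nat_one_div_lt
      (show (0:ℝ) < min (t+1) (1-t) from lt_min (by linarith) (by linarith))
    have h1' := lt_min_iff.mp hn
    exact ⟨n, by linarith [h1'.1], by linarith [h1'.2]⟩
  · rintro ⟨n, hn1, hn2⟩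
    have hp : 0 < 1/((n:ℝ)+1) := by positivity
    have hp1 : 1/((n:ℝ)+1) ≤ 1 := by
      rw [div_le_one (by positivity)]
      have : (0:ℝ) ≤ n := Nat.cast_nonneg n
      linarith
    exact ⟨by linarith, by linarith⟩

/-- If `f ∈ AC[-1,1]` with `f', f'' ∈ AC_loc(-1,1)` (encoded via the derivative
functions `f', f'', f'''` and the FTC representation) and `(1-x²)f''' ∈ L²(-1,1)`,
then automatically `(1-x²)^{1/2} f'' ∈ L²(-1,1)` and `f' ∈ L²(-1,1)`. -/
theorem domain_refinement
    (f f' f'' f''' : ℝ → ℂ)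
    -- f ∈ AC[-1,1] with derivative f'
    (hf_ftc : ∀ x ∈ Icc (-1 : ℝ) 1, ∀ y ∈ Icc (-1 : ℝ) 1, f y - f x = ∫ t in x..y, f' t)
    (hf'_int : IntervalIntegrable f' volume (-1) 1)
    -- f' ∈ AC_loc(-1,1) with derivative f''
    (hf''_loc : ∀ x ∈ Ioo (-1 : ℝ) 1, ∀ y ∈ Ioo (-1 : ℝ) 1,
      IntervalIntegrable f'' volume x y)
    (hf'_ftc : ∀ x ∈ Ioo (-1 : ℝ) 1, ∀ y ∈ Ioo (-1 : ℝ) 1,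
      f' y - f' x = ∫ t in x..y, f'' t)
    -- f'' ∈ AC_loc(-1,1) with derivative f'''
    (hf'''_loc : ∀ x ∈ Ioo (-1 : ℝ) 1, ∀ y ∈ Ioo (-1 : ℝ) 1,
      IntervalIntegrable f''' volume x y)
    (hf''_ftc : ∀ x ∈ Ioo (-1 : ℝ) 1, ∀ y ∈ Ioo (-1 : ℝ) 1,
      f'' y - f'' x = ∫ t in x..y, f''' t)
    -- (1-x²) f''' ∈ L²(-1,1)
    (hf'''_L2 : IntegrableOn (fun x => (1 - x ^ 2) ^ 2 * ‖f''' x‖ ^ 2) (Ioo (-1 : ℝ) 1)) :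
    IntegrableOn (fun x => (1 - x ^ 2) * ‖f'' x‖ ^ 2) (Ioo (-1 : ℝ) 1) ∧
    IntegrableOn (fun x => ‖f' x‖ ^ 2) (Ioo (-1 : ℝ) 1) := by
  have h0 : (0:ℝ) ∈ Ioo (-1:ℝ) 1 := by norm_num
  have hM2 : 0 ≤ ∫ t in Set.Ioo (-1:ℝ) 1, (1 - t ^ 2) ^ 2 * ‖f''' t‖ ^ 2 :=
    setIntegral_nonneg measurableSet_Ioo (fun t _ => by positivity)
  obtain ⟨K, hKdef⟩ : ∃ K : ℝ,
      ‖f'' 0‖ + 2 * ((∫ t in Set.Ioo (-1:ℝ) 1, (1 - t ^ 2) ^ 2 * ‖f''' t‖ ^ 2) + 1) = K :=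
    ⟨_, rfl⟩
  have hK0 : 0 ≤ K := by
    rw [← hKdef]
    have := norm_nonneg (f'' 0)
    linarith
  have hB2 : ∀ x ∈ Ioo (-1:ℝ) 1, Real.sqrt (1 - x^2) * ‖f'' x‖ ≤ K := fun x hx =>
    hKdef ▸ aux_f''_bound f'' f''' hf'''_loc hf''_ftc hf'''_L2 hx
  have hmf'' : AEStronglyMeasurable f'' (volume.restrict (Ioo (-1:ℝ) 1)) := by
    rw [aux_union]
    apply AEStronglyMeasurable.iUnion
    intro n
    have hp : 0 < 1/((n:ℝ)+1) := by positivity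
    have hp1 : 1/((n:ℝ)+1) ≤ 1 := by
      rw [div_le_one (by positivity)]
      have : (0:ℝ) ≤ n := Nat.cast_nonneg n
      linarith
    exact (hf''_loc _ ⟨by linarith, by linarith⟩ _ ⟨by linarith, by linarith⟩).1.aestronglyMeasurable
  have hclaim1 : IntegrableOn (fun x => (1 - x ^ 2) * ‖f'' x‖ ^ 2) (Ioo (-1:ℝ) 1) := by
    constructor
    · exact (Continuous.aestronglyMeasurable (by fun_prop : Continuous fun x : ℝ => 1 - x^2)).mul
        ((hmf''.norm).pow 2)
    · apply HasFiniteIntegral.restrict_of_bounded (C := K^2) measure_Ioo_lt_top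
      rw [ae_restrict_iff' measurableSet_Ioo]
      filter_upwards with x hx
      have h1x : 0 < 1 - x^2 := by nlinarith [hx.1, hx.2]
      have hb := hB2 x hx
      have hsq : (Real.sqrt (1-x^2) * ‖f'' x‖)^2 ≤ K^2 :=
        pow_le_pow_left₀ (by positivity) hb 2
      rw [mul_pow, Real.sq_sqrt h1x.le] at hsq
      rw [Real.norm_eq_abs, abs_of_nonneg (by positivity)]
      exact hsq
  refine ⟨hclaim1, ?_⟩
  have hf'bd : ∀ x ∈ Ioo (-1:ℝ) 1, ‖f' x‖ ≤ ‖f' 0‖ + K * 2 := by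
    intro x hx
    have heq := hf'_ftc 0 h0 x hx
    have huI : Set.uIcc (0:ℝ) x ⊆ Set.Ioo (-1:ℝ) 1 := Set.ordConnected_Ioo.uIcc_subset h0 hx
    have hcont : ContinuousOn (fun t : ℝ => K * (Real.sqrt (1-t^2))⁻¹) (Set.uIcc 0 x) := by
      apply ContinuousOn.mul continuousOn_const
      apply ContinuousOn.inv₀ (by fun_prop)
      intro t ht
      have ht' := huI ht
      have : 0 < 1 - t^2 := by nlinarith [ht'.1, ht'.2]
      positivity
    have hIntb : IntervalIntegrable (fun t : ℝ => K * (Real.sqrt (1-t^2))⁻¹) volume 0 x :=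
      hcont.intervalIntegrable
    have hIntn : IntervalIntegrable (fun t => ‖f'' t‖) volume 0 x := (hf''_loc 0 h0 x hx).norm
    have hpt : ∀ t ∈ Set.uIcc (0:ℝ) x, ‖f'' t‖ ≤ K * (Real.sqrt (1-t^2))⁻¹ := by
      intro t ht
      have ht' := huI ht
      have h1t : 0 < 1 - t^2 := by nlinarith [ht'.1, ht'.2]
      have hst : 0 < Real.sqrt (1-t^2) := Real.sqrt_pos.mpr h1t
      have hb := hB2 t ht'
      rw [← div_eq_mul_inv, le_div_iff₀ hst, mul_comm]
      exact hb
    have hxint : ‖f' x‖ ≤ ‖f' 0‖ + |∫ t in (0:ℝ)..x, ‖f'' t‖| := by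
      have hfx : f' x = (∫ t in (0:ℝ)..x, f'' t) + f' 0 := by rw [← heq]; ring
      calc ‖f' x‖ = ‖(∫ t in (0:ℝ)..x, f'' t) + f' 0‖ := by rw [← hfx]
        _ ≤ ‖∫ t in (0:ℝ)..x, f'' t‖ + ‖f' 0‖ := norm_add_le _ _
        _ ≤ |∫ t in (0:ℝ)..x, ‖f'' t‖| + ‖f' 0‖ := by
            linarith [intervalIntegral.norm_integral_le_abs_integral_norm
              (f := f'') (a := (0:ℝ)) (b := x) (μ := volume)]
        _ = _ := by ring
    have harcs := aux_int_arcsin hx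
    have habs : |∫ t in (0:ℝ)..x, ‖f'' t‖| ≤ K * 2 := by
      rcases le_total 0 x with h0x | h0x
      · rw [abs_of_nonneg (intervalIntegral.integral_nonneg h0x (fun t _ => norm_nonneg _))]
        calc (∫ t in (0:ℝ)..x, ‖f'' t‖)
            ≤ ∫ t in (0:ℝ)..x, K * (Real.sqrt (1-t^2))⁻¹ :=
              intervalIntegral.integral_mono_on h0x hIntn hIntb
                (fun t ht => hpt t (by rwa [Set.uIcc_of_le h0x]))
          _ = K * ∫ t in (0:ℝ)..x, (Real.sqrt (1-t^2))⁻¹ :=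
              intervalIntegral.integral_const_mul _ _
          _ ≤ K * 2 := mul_le_mul_of_nonneg_left (le_trans (le_abs_self _) harcs) hK0
      · rw [intervalIntegral.integral_symm, abs_neg,
          abs_of_nonneg (intervalIntegral.integral_nonneg h0x (fun t _ => norm_nonneg _))]
        calc (∫ t in x..(0:ℝ), ‖f'' t‖)
            ≤ ∫ t in x..(0:ℝ), K * (Real.sqrt (1-t^2))⁻¹ :=
              intervalIntegral.integral_mono_on h0x hIntn.symm hIntb.symm
                (fun t ht => hpt t (by rwa [Set.uIcc_comm, Set.uIcc_of_le h0x]))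
          _ = K * ∫ t in x..(0:ℝ), (Real.sqrt (1-t^2))⁻¹ :=
              intervalIntegral.integral_const_mul _ _
          _ ≤ K * 2 := by
              have h2' : (∫ t in x..(0:ℝ), (Real.sqrt (1-t^2))⁻¹) ≤ 2 := by
                rw [intervalIntegral.integral_symm]
                linarith [neg_le_of_abs_le harcs]
              exact mul_le_mul_of_nonneg_left h2' hK0
    linarith
  have hmf' : AEStronglyMeasurable f' (volume.restrict (Ioo (-1:ℝ) 1)) :=
    hf'_int.1.aestronglyMeasurable.mono_measure
      (Measure.restrict_mono Set.Ioo_subset_Ioc_self le_rfl)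
  constructor
  · exact (hmf'.norm).pow 2
  · apply HasFiniteIntegral.restrict_of_bounded (C := (‖f' 0‖ + K*2)^2) measure_Ioo_lt_top
    rw [ae_restrict_iff' measurableSet_Ioo]
    filter_upwards with x hx
    rw [Real.norm_eq_abs, abs_of_nonneg (by positivity)]
    exact pow_le_pow_left₀ (norm_nonneg _) (hf'bd x hx) 2
end
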